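/- Let X be the Cayley graph of an infinite finitely generated group, regarded as a geodesic metric space, and let c ∈ X be a vertex. Then for every vertex a with d(a,c) = ρ > 0 there exists a geodesic ray γ starting at a such that γ avoids the open ball of radius ρ/2 around c. -/

import Mathlib

open Pointwise

/-- The symmetrized generating set `S ∪ S⁻¹`. -/
def genSet {G : Type} [Group G] (S : Finset G) : Set G :=
  (S : Set G) ∪ (S : Set G)⁻¹

/-- Word length of `g` with respect to `S`: least `n` with `g` a product of `n`
elements of `S ∪ S⁻¹`. -/
noncomputable def wlen {G : Type} [Group G] (S : Finset G) (g : G) : ℕ :=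
  sInf {n : ℕ | g ∈ (genSet S) ^ n}

/-- Word distance between `x` and `y`. -/
noncomputable def wdist {G : Type} [Group G] (S : Finset G) (x y : G) : ℕ :=
  wlen S (x⁻¹ * y)

namespace CayleyAux

variable {G : Type} [Group G] {S : Finset G}

lemma list_prod_mem_pow : ∀ l : List G, (∀ x ∈ l, x ∈ genSet S) → l.prod ∈ (genSet S) ^ l.length := by
  intro l
  induction l with
  | nil => intro _; simp
  | cons x l ih =>
      intro h
      rw [List.prod_cons, List.length_cons, pow_succ']
      exact Set.mul_mem_mul (h x (by simp)) (ih (fun y hy => h y (by simp [hy])))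

lemma exists_pow_mem (hgen : Subgroup.closure (S : Set G) = ⊤) (g : G) :
    ∃ n, g ∈ (genSet S) ^ n := by
  have h1 : g ∈ Subgroup.closure (S : Set G) := by rw [hgen]; trivial
  have h2 : g ∈ Submonoid.closure ((S : Set G) ∪ (S : Set G)⁻¹) := by
    rw [← Subgroup.closure_toSubmonoid]; exact h1
  obtain ⟨l, hl, hprod⟩ := Submonoid.exists_list_of_mem_closure h2
  exact ⟨l.length, hprod ▸ list_prod_mem_pow l hl⟩

lemma wlen_spec (hgen : Subgroup.closure (S : Set G) = ⊤) (g : G) :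
    g ∈ (genSet S) ^ (wlen S g) :=
  Nat.sInf_mem (exists_pow_mem hgen g)

lemma wlen_le {g : G} {n : ℕ} (h : g ∈ (genSet S) ^ n) : wlen S g ≤ n :=
  Nat.sInf_le h

lemma wlen_one : wlen S (1 : G) = 0 :=
  Nat.le_zero.mp (wlen_le (by simp))

lemma wlen_eq_zero (hgen : Subgroup.closure (S : Set G) = ⊤) {g : G}
    (h : wlen S g = 0) : g = 1 := by
  have := wlen_spec hgen g
  rw [h, pow_zero] at this
  simpa using this

lemma genSet_inv : (genSet S)⁻¹ = genSet S := by
  ext x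
  simp [genSet, or_comm]

lemma wlen_inv (g : G) : wlen S g⁻¹ = wlen S g := by
  have key : ∀ h : G, ∀ n, h ∈ (genSet S) ^ n → h⁻¹ ∈ (genSet S) ^ n := by
    intro h n hh
    have : h⁻¹ ∈ ((genSet S) ^ n)⁻¹ := Set.inv_mem_inv.mpr hh
    rwa [← inv_pow, genSet_inv] at this
  unfold wlen
  congr 1
  ext n
  exact ⟨fun hh => by simpa using key _ n hh, fun hh => key _ n hh⟩

lemma wlen_mul (hgen : Subgroup.closure (S : Set G) = ⊤) (g h : G) :
    wlen S (g * h) ≤ wlen S g + wlen S h := by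
  apply wlen_le
  rw [pow_add]
  exact Set.mul_mem_mul (wlen_spec hgen g) (wlen_spec hgen h)

lemma wdist_self (x : G) : wdist S x x = 0 := by
  simp [wdist, wlen_one]

lemma wdist_comm (x y : G) : wdist S x y = wdist S y x := by
  unfold wdist
  rw [← wlen_inv]
  simp

lemma wdist_triangle (hgen : Subgroup.closure (S : Set G) = ⊤) (x y z : G) :
    wdist S x z ≤ wdist S x y + wdist S y z := by
  have : x⁻¹ * z = (x⁻¹ * y) * (y⁻¹ * z) := by group
  unfold wdist
  rw [this]
  exact wlen_mul hgen _ _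

lemma wdist_eq_zero (hgen : Subgroup.closure (S : Set G) = ⊤) {x y : G}
    (h : wdist S x y = 0) : x = y := by
  have := wlen_eq_zero hgen h
  have := inv_mul_eq_one.mp this
  exact this

lemma wdist_mul_left (g x y : G) : wdist S (g * x) (g * y) = wdist S x y := by
  unfold wdist
  congr 1
  group



variable {G : Type} [Group G] {S : Finset G}

/-- Step decomposition: peel off one generator from a geodesic. -/
lemma exists_step (hgen : Subgroup.closure (S : Set G) = ⊤) {x y : G} {n : ℕ}
    (h : wdist S x y = n + 1) :
    ∃ z, wdist S x z = n ∧ wdist S z y ≤ 1 := by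
  have hs := wlen_spec hgen (x⁻¹ * y)
  rw [show wlen S (x⁻¹ * y) = n + 1 from h, pow_succ] at hs
  obtain ⟨u, hu, s, hsmem, hus⟩ := Set.mem_mul.mp hs
  refine ⟨x * u, ?_, ?_⟩
  · have h1 : wdist S x (x * u) ≤ n := by
      unfold wdist; rw [inv_mul_cancel_left]; exact wlen_le hu
    have h2 : wdist S (x * u) y ≤ 1 := by
      unfold wdist
      have hxy : (x * u)⁻¹ * y = u⁻¹ * (x⁻¹ * y) := by group
      rw [hxy, ← hus, inv_mul_cancel_left]
      exact wlen_le (by simpa using hsmem)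
    have h3 := wdist_triangle hgen x (x * u) y
    omega
  · unfold wdist
    have hxy : (x * u)⁻¹ * y = u⁻¹ * (x⁻¹ * y) := by group
    rw [hxy, ← hus, inv_mul_cancel_left]
    exact wlen_le (by simpa using hsmem)

/-- Existence of a geodesic chain from `x` to `y`. -/
lemma exists_chain (hgen : Subgroup.closure (S : Set G) = ⊤) :
    ∀ n : ℕ, ∀ x y : G, wdist S x y = n →
    ∃ f : ℕ → G, f 0 = x ∧ f n = y ∧ (∀ k, k < n → wdist S (f k) (f (k+1)) ≤ 1) := by
  intro n
  induction n with
  | zero =>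
      intro x y h
      have := wdist_eq_zero hgen h
      exact ⟨fun _ => x, rfl, this ▸ rfl, fun k hk => by omega⟩
  | succ n ih =>
      intro x y h
      obtain ⟨z, hz1, hz2⟩ := exists_step hgen h
      obtain ⟨g, hg0, hgn, hgs⟩ := ih x z hz1
      refine ⟨fun k => if k ≤ n then g k else y, by simp [hg0], by simp, ?_⟩
      intro k hk
      by_cases h1 : k + 1 ≤ n
      · simp only [if_pos (by omega : k ≤ n), if_pos h1]
        exact hgs k (by omega)
      · have hkn : k = n := by omega
        subst hkn
        simp only [if_pos le_rfl, if_neg (by omega : ¬ k + 1 ≤ k), hgn]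
        exact hz2

/-- Paths with unit steps are 1-Lipschitz against index distance. -/
lemma chain_bound (hgen : Subgroup.closure (S : Set G) = ⊤) {f : ℕ → G} {n : ℕ}
    (H : ∀ k, k < n → wdist S (f k) (f (k+1)) ≤ 1) :
    ∀ i j, i ≤ j → j ≤ n → wdist S (f i) (f j) ≤ j - i := by
  intro i j
  induction j with
  | zero =>
      intro hij _
      have : i = 0 := by omega
      subst this
      simp [wdist_self]
  | succ j ih =>
      intro hij hjn
      by_cases h1 : i ≤ j
      · have := wdist_triangle hgen (f i) (f j) (f (j+1))
        have h2 := ih h1 (by omega)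
        have h3 := H j (by omega)
        omega
      · have : i = j + 1 := by omega
        subst this
        simp [wdist_self]

/-- Rigidity: a unit-step chain between points at distance `n` is a geodesic. -/
lemma chain_rigid (hgen : Subgroup.closure (S : Set G) = ⊤) {f : ℕ → G} {n : ℕ}
    (H : ∀ k, k < n → wdist S (f k) (f (k+1)) ≤ 1)
    (hend : wdist S (f 0) (f n) = n) :
    ∀ i j, i ≤ j → j ≤ n → wdist S (f i) (f j) = j - i := by
  intro i j hij hjn
  have h1 : wdist S (f i) (f j) ≤ j - i := chain_bound hgen H i j hij hjn
  have h2 : wdist S (f 0) (f i) ≤ i := by simpa using chain_bound hgen H 0 i (by omega) (by omega)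
  have h3 : wdist S (f j) (f n) ≤ n - j := chain_bound hgen H j n hjn le_rfl
  have t1 := wdist_triangle hgen (f 0) (f i) (f n)
  have t2 := wdist_triangle hgen (f i) (f j) (f n)
  omega

/-- Balls are finite. -/
lemma ball_finite (hgen : Subgroup.closure (S : Set G) = ⊤) (a : G) (n : ℕ) :
    {x : G | wdist S a x ≤ n}.Finite := by
  have hA : (genSet S).Finite := S.finite_toSet.union S.finite_toSet.inv
  have hpow : ∀ k : ℕ, ((genSet S) ^ k).Finite := by
    intro k
    induction k with
    | zero => simp
    | succ k ih => rw [pow_succ]; exact ih.mul hA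
  have hsub : {x : G | wdist S a x ≤ n} ⊆ ⋃ k ∈ Set.Iic n, (fun g => a * g) '' ((genSet S) ^ k) := by
    intro x hx
    have hspec : a⁻¹ * x ∈ (genSet S) ^ (wlen S (a⁻¹ * x)) := wlen_spec hgen _
    refine Set.mem_biUnion (show wlen S (a⁻¹*x) ∈ Set.Iic n from hx) ⟨a⁻¹ * x, hspec, by group⟩
  exact Set.Finite.subset (Set.Finite.biUnion (Set.finite_Iic n) (fun k _ => (hpow k).image _)) hsub

/-- Spheres are nonempty: there are points at every distance. -/
lemma sphere_nonempty (hgen : Subgroup.closure (S : Set G) = ⊤) [Infinite G] (a : G) (n : ℕ) :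
    ∃ x : G, wdist S a x = n := by
  obtain ⟨g, hg⟩ : ∃ g : G, ¬ (wdist S a g ≤ n) := by
    by_contra hcon
    push_neg at hcon
    exact Set.infinite_univ (α := G)
      (Set.Finite.subset (ball_finite hgen a n) (fun x _ => hcon x))
  obtain ⟨f, hf0, hfN, hfs⟩ := exists_chain hgen (wdist S a g) a g rfl
  refine ⟨f n, ?_⟩
  have := chain_rigid hgen hfs (by rw [hf0, hfN]) 0 n (by omega) (by omega)
  rw [← hf0]
  simpa using this



open CategoryTheory Opposite

variable {G : Type} [Group G]

/-- Two geodesic rays of length `n` from `a` in opposite directions. -/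
def TwoRay (S : Finset G) (a : G) (n : ℕ) : Type :=
  { f : (ℕ → G) × (ℕ → G) //
    f.1 0 = a ∧ f.2 0 = a ∧
    (∀ i, n ≤ i → f.1 i = f.1 n) ∧ (∀ i, n ≤ i → f.2 i = f.2 n) ∧
    (∀ i, i < n → wdist S (f.1 i) (f.1 (i+1)) ≤ 1) ∧
    (∀ i, i < n → wdist S (f.2 i) (f.2 (i+1)) ≤ 1) ∧
    (∀ i j, i ≤ n → j ≤ n → wdist S (f.1 i) (f.2 j) = i + j) }

def res {S : Finset G} {a : G} {m n : ℕ} (h : m ≤ n) (x : TwoRay S a n) : TwoRay S a m :=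
  ⟨(fun i => x.val.1 (min i m), fun i => x.val.2 (min i m)), by
    obtain ⟨c1, c2, c3, c4, c5, c6, c7⟩ := x.2
    refine ⟨by simpa using c1, by simpa using c2, ?_, ?_, ?_, ?_, ?_⟩ <;> dsimp only
    · intro i hi; rw [Nat.min_eq_right hi, Nat.min_self]
    · intro i hi; rw [Nat.min_eq_right hi, Nat.min_self]
    · intro i hi
      rw [Nat.min_eq_left (by omega), Nat.min_eq_left (by omega)]
      exact c5 i (by omega)
    · intro i hi
      rw [Nat.min_eq_left (by omega), Nat.min_eq_left (by omega)]
      exact c6 i (by omega)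
    · intro i j hi hj
      rw [Nat.min_eq_left hi, Nat.min_eq_left hj]
      exact c7 i j (by omega) (by omega)⟩

lemma res_id {S : Finset G} {a : G} {n : ℕ} (x : TwoRay S a n) : res (le_refl n) x = x := by
  obtain ⟨c1, c2, c3, c4, c5, c6, c7⟩ := x.2
  apply Subtype.ext
  apply Prod.ext <;> funext i <;> simp only [res]
  · rcases le_or_gt i n with h | h
    · rw [Nat.min_eq_left h]
    · rw [Nat.min_eq_right (by omega), c3 i (by omega)]
  · rcases le_or_gt i n with h | h
    · rw [Nat.min_eq_left h]
    · rw [Nat.min_eq_right (by omega), c4 i (by omega)]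

lemma res_res {S : Finset G} {a : G} {k m n : ℕ} (h1 : k ≤ m) (h2 : m ≤ n) (x : TwoRay S a n) :
    res h1 (res h2 x) = res (h1.trans h2) x := by
  apply Subtype.ext
  apply Prod.ext <;> funext i <;> simp only [res] <;>
    rw [Nat.min_eq_left (le_trans (Nat.min_le_right i k) h1)]

/-- The inverse system of two-sided geodesic segments. -/
def raysFunctor (S : Finset G) (a : G) : ℕᵒᵖ ⥤ Type where
  obj n := TwoRay S a n.unop
  map {n m} h := TypeCat.ofHom (res (leOfHom h.unop))
  map_id n := by ext x; exact res_id x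
  map_comp {n m k} h1 h2 := by
    ext x
    exact (res_res (leOfHom h2.unop) (leOfHom h1.unop) x).symm

lemma tworay_nonempty {S : Finset G} (hgen : Subgroup.closure (S : Set G) = ⊤) [Infinite G]
    (a : G) (n : ℕ) : Nonempty (TwoRay S a n) := by
  obtain ⟨w, hw⟩ := sphere_nonempty hgen a (2 * n)
  obtain ⟨g, hg0, hgN, hgs⟩ := exists_chain hgen (2 * n) a w hw
  have hrig : ∀ i j, i ≤ j → j ≤ 2 * n → wdist S (g i) (g j) = j - i :=
    chain_rigid hgen hgs (by rw [hg0, hgN, hw])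
  set t := a * (g n)⁻¹ with ht
  refine ⟨⟨(fun i => t * g (n - min i n), fun i => t * g (n + min i n)), ?_, ?_, ?_, ?_, ?_, ?_, ?_⟩⟩ <;>
    dsimp only
  · simp [ht]
  · simp [ht]
  · intro i hi; rw [Nat.min_eq_right hi, Nat.min_self]
  · intro i hi; rw [Nat.min_eq_right hi, Nat.min_self]
  · intro i hi
    rw [Nat.min_eq_left (by omega), Nat.min_eq_left (by omega), wdist_mul_left, wdist_comm]
    have := hrig (n - (i+1)) (n - i) (by omega) (by omega)
    rw [this]
    omega
  · intro i hi
    rw [Nat.min_eq_left (by omega), Nat.min_eq_left (by omega), wdist_mul_left]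
    have := hrig (n + i) (n + (i+1)) (by omega) (by omega)
    rw [this]
    omega
  · intro i j hi hj
    rw [Nat.min_eq_left hi, Nat.min_eq_left hj, wdist_mul_left]
    have := hrig (n - i) (n + j) (by omega) (by omega)
    rw [this]
    omega

lemma tworay_finite {S : Finset G} (hgen : Subgroup.closure (S : Set G) = ⊤)
    (a : G) (n : ℕ) : Finite (TwoRay S a n) := by
  haveI : Finite {x : G // wdist S a x ≤ n} := (ball_finite hgen a n).to_subtype
  have key : ∀ (x : TwoRay S a n) (i : ℕ), i ≤ n →
      wdist S a (x.val.1 i) ≤ n ∧ wdist S a (x.val.2 i) ≤ n := by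
    intro x i hi
    obtain ⟨c1, c2, c3, c4, c5, c6, c7⟩ := x.2
    constructor
    · have := c7 i 0 hi (by omega)
      rw [c2] at this
      rw [wdist_comm, this]
      omega
    · have := c7 0 i (by omega) hi
      rw [c1] at this
      rw [this]
      omega
  apply Finite.of_injective (fun x : TwoRay S a n =>
    ((fun i : Fin (n+1) => (⟨x.val.1 i, (key x i (by omega)).1⟩ : {x : G // wdist S a x ≤ n})),
     (fun i : Fin (n+1) => (⟨x.val.2 i, (key x i (by omega)).2⟩ : {x : G // wdist S a x ≤ n}))))
  intro x y hxy
  have h1 := congrArg Prod.fst hxy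
  have h2 := congrArg Prod.snd hxy
  simp only at h1 h2
  have e1 : ∀ i : ℕ, i ≤ n → x.val.1 i = y.val.1 i := by
    intro i hi
    have := congrFun h1 ⟨i, by omega⟩
    exact Subtype.ext_iff.mp this
  have e2 : ∀ i : ℕ, i ≤ n → x.val.2 i = y.val.2 i := by
    intro i hi
    have := congrFun h2 ⟨i, by omega⟩
    exact Subtype.ext_iff.mp this
  obtain ⟨_, _, c3x, c4x, _, _, _⟩ := x.2
  obtain ⟨_, _, c3y, c4y, _, _, _⟩ := y.2
  apply Subtype.ext
  apply Prod.ext <;> funext i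
  · rcases le_or_gt i n with h | h
    · exact e1 i h
    · rw [c3x i (by omega), c3y i (by omega)]
      exact e1 n le_rfl
  · rcases le_or_gt i n with h | h
    · exact e2 i h
    · rw [c4x i (by omega), c4y i (by omega)]
      exact e2 n le_rfl

end CayleyAux

open CayleyAux CategoryTheory Opposite

/-- In the Cayley graph of an infinite finitely generated group, for any
vertex `a` with `d(a,c) = ρ > 0` there is a geodesic ray starting at `a` avoiding the
open ball of radius `ρ/2` around `c`. -/
theorem stmt_4 {G : Type} [Group G] [Infinite G] (S : Finset G)
    (hgen : Subgroup.closure (S : Set G) = ⊤)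
    (c a : G) (ρ : ℕ) (hρ : 0 < ρ) (hd : wdist S a c = ρ) :
    ∃ γ : ℕ → G, γ 0 = a ∧
      (∀ m n : ℕ, m ≤ n → wdist S (γ m) (γ n) = n - m) ∧
      (∀ n : ℕ, ρ ≤ 2 * wdist S (γ n) c) := by
  haveI hfin : ∀ j : ℕᵒᵖ, Finite ((raysFunctor S a).obj j) :=
    fun j => tworay_finite hgen a j.unop
  haveI hne : ∀ j : ℕᵒᵖ, Nonempty ((raysFunctor S a).obj j) :=
    fun j => tworay_nonempty hgen a j.unop
  obtain ⟨u, hu⟩ := nonempty_sections_of_finite_inverse_system (raysFunctor S a)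
  -- the two rays
  set β₁ : ℕ → G := fun i => (u (op i)).val.1 i with hβ₁
  set β₂ : ℕ → G := fun i => (u (op i)).val.2 i with hβ₂
  -- stability of values across levels
  have stab : ∀ i n : ℕ, i ≤ n →
      (u (op n)).val.1 i = β₁ i ∧ (u (op n)).val.2 i = β₂ i := by
    intro i n hin
    have hcomp := hu ((homOfLE hin).op : op n ⟶ op i)
    have : res hin (u (op n)) = u (op i) := hcomp
    constructor
    · have := congrFun (congrArg (fun z => z.val.1) this) i
      simp only [res, Nat.min_self] at this
      show _ = (u (op i)).val.1 i
      exact this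
    · have := congrFun (congrArg (fun z => z.val.2) this) i
      simp only [res, Nat.min_self] at this
      show _ = (u (op i)).val.2 i
      exact this
  have hprop : ∀ n : ℕ, ((u (op n)).val.1 0 = a ∧ (u (op n)).val.2 0 = a) ∧
      (∀ i, i < n → wdist S ((u (op n)).val.1 i) ((u (op n)).val.1 (i+1)) ≤ 1) ∧
      (∀ i, i < n → wdist S ((u (op n)).val.2 i) ((u (op n)).val.2 (i+1)) ≤ 1) ∧
      (∀ i j, i ≤ n → j ≤ n → wdist S ((u (op n)).val.1 i) ((u (op n)).val.2 j) = i + j) := by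
    intro n
    obtain ⟨c1, c2, c3, c4, c5, c6, c7⟩ := (u (op n)).2
    exact ⟨⟨c1, c2⟩, c5, c6, c7⟩
  have hβ₁0 : β₁ 0 = a := ((hprop 0).1).1
  have hβ₂0 : β₂ 0 = a := ((hprop 0).1).2
  -- cross distances
  have hcross : ∀ i j : ℕ, wdist S (β₁ i) (β₂ j) = i + j := by
    intro i j
    have h7 := (hprop (max i j)).2.2.2 i j (le_max_left i j) (le_max_right i j)
    rwa [(stab i (max i j) (le_max_left i j)).1, (stab j (max i j) (le_max_right i j)).2] at h7
  have hda1 : ∀ i : ℕ, wdist S a (β₁ i) = i := by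
    intro i
    have := hcross i 0
    rw [hβ₂0] at this
    rw [wdist_comm]
    omega
  have hda2 : ∀ j : ℕ, wdist S a (β₂ j) = j := by
    intro j
    have := hcross 0 j
    rwa [hβ₁0, Nat.zero_add] at this
  -- each ray is geodesic
  have hray : ∀ (β : ℕ → G), (∀ i, wdist S a (β i) = i) →
      (∀ n, ∀ i, i < n → wdist S ((fun k => β k) i) (β (i+1)) ≤ 1) →
      ∀ m n : ℕ, m ≤ n → wdist S (β m) (β n) = n - m := by
    intro β hda hsteps m n hmn
    have hub : wdist S (β m) (β n) ≤ n - m :=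
      chain_bound hgen (hsteps n) m n hmn le_rfl
    have hlb := wdist_triangle hgen a (β m) (β n)
    rw [hda m, hda n] at hlb
    omega
  have hsteps1 : ∀ n, ∀ i, i < n → wdist S (β₁ i) (β₁ (i+1)) ≤ 1 := by
    intro n i hi
    have h5 := (hprop n).2.1 i hi
    rwa [(stab i n (by omega)).1, (stab (i+1) n (by omega)).1] at h5
  have hsteps2 : ∀ n, ∀ i, i < n → wdist S (β₂ i) (β₂ (i+1)) ≤ 1 := by
    intro n i hi
    have h6 := (hprop n).2.2.1 i hi
    rwa [(stab i n (by omega)).2, (stab (i+1) n (by omega)).2] at h6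
  have hgeo1 : ∀ m n : ℕ, m ≤ n → wdist S (β₁ m) (β₁ n) = n - m := hray β₁ hda1 hsteps1
  have hgeo2 : ∀ m n : ℕ, m ≤ n → wdist S (β₂ m) (β₂ n) = n - m := hray β₂ hda2 hsteps2
  -- one of the two rays avoids the ball
  by_cases hcase : ∀ n : ℕ, ρ ≤ 2 * wdist S (β₁ n) c
  · exact ⟨β₁, hβ₁0, hgeo1, hcase⟩
  · push_neg at hcase
    obtain ⟨n, hn⟩ := hcase
    refine ⟨β₂, hβ₂0, hgeo2, ?_⟩
    intro m
    by_contra hm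
    push_neg at hm
    have h1 : ρ ≤ n + wdist S (β₁ n) c := by
      have := wdist_triangle hgen a (β₁ n) c
      rw [hda1 n] at this
      omega
    have h2 : ρ ≤ m + wdist S (β₂ m) c := by
      have := wdist_triangle hgen a (β₂ m) c
      rw [hda2 m] at this
      omega
    have h3 : n + m ≤ wdist S (β₁ n) c + wdist S (β₂ m) c := by
      have ht := wdist_triangle hgen (β₁ n) c (β₂ m)
      have hc := hcross n m
      rw [wdist_comm c (β₂ m)] at ht
      omega
    omega
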